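/- arXiv:0902.3220 — 3 statements merged into one kernel-verified Lean document; each statement's English description precedes it below -/
import Mathlib

section
/- The Pervova group Γ = ⟨a, b, c⟩ acting on the ternary rooted tree, where a = σ_{123} (rooted cyclic permutation), b = (a, a⁻¹, b), c = (c, a, a⁻¹), is regular branch over its commutator subgroup: 1*Γ' ≤ Γ', i.e. Γ' contains v*Γ' for every vertex v. -/
open List

/-- Vertices of the regular rooted tree over alphabet `X`: finite words. -/
abbrev Vtx (X : Type*) := List X

section Tree

variable {X : Type*} [DecidableEq X]

/-- A permutation of the vertex set is a rooted-tree automorphism if it fixes the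
root and maps children of a vertex to children of its image. -/
def IsTreeAut (f : Equiv.Perm (Vtx X)) : Prop :=
  f [] = [] ∧ ∀ (w : Vtx X) (x : X), ∃ y : X, f (w ++ [x]) = f w ++ [y]

/-- The state (section) of `f` at the vertex `w`, as a function on vertices. -/
def stateFun (f : Equiv.Perm (Vtx X)) (w : Vtx X) : Vtx X → Vtx X :=
  fun t => (f (w ++ t)).drop w.length

/-- The rigid stabilizer of the vertex `v` in the full automorphism group:
all permutations moving only (proper or improper) descendants of `v`. -/
def rist (v : Vtx X) : Subgroup (Equiv.Perm (Vtx X)) where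
  carrier := {g | ∀ w : Vtx X, ¬ v <+: w → g w = w}
  one_mem' := by intro w _; rfl
  mul_mem' := by
    intro a b ha hb w hw
    have : (a * b) w = a (b w) := rfl
    rw [this, hb w hw, ha w hw]
  inv_mem' := by
    intro a ha w hw
    have h := ha w hw
    conv_lhs => rw [← h]
    exact Equiv.symm_apply_apply a w

/-- The rigid stabilizer of `v` in `G`. -/
def ristG (G : Subgroup (Equiv.Perm (Vtx X))) (v : Vtx X) :
    Subgroup (Equiv.Perm (Vtx X)) :=
  rist v ⊓ G

/-- The `n`-th level rigid stabilizer of `G`: the subgroup generated by the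
rigid stabilizers of all vertices of level `n`. -/
def ristLevel (G : Subgroup (Equiv.Perm (Vtx X))) (n : ℕ) :
    Subgroup (Equiv.Perm (Vtx X)) :=
  ⨆ v ∈ {v : Vtx X | v.length = n}, ristG G v

/-- The `n`-th level stabilizer of `G`: elements fixing all vertices of level `≤ n`. -/
def stabLevel (G : Subgroup (Equiv.Perm (Vtx X))) (n : ℕ) :
    Subgroup (Equiv.Perm (Vtx X)) :=
  G ⊓ { carrier := {g | ∀ w : Vtx X, w.length ≤ n → g w = w}
        one_mem' := by intro w _; rfl
        mul_mem' := by
          intro a b ha hb w hw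
          have : (a * b) w = a (b w) := rfl
          rw [this, hb w hw, ha w hw]
        inv_mem' := by
          intro a ha w hw
          have h := ha w hw
          conv_lhs => rw [← h]
          exact Equiv.symm_apply_apply a w }

/-- Underlying function of the vtr `v*g`. -/
def vtrFun (v : Vtx X) (g : Vtx X → Vtx X) : Vtx X → Vtx X :=
  fun w => if v <+: w then v ++ g (w.drop v.length) else w

lemma vtr_aux (v : Vtx X) (g h : Vtx X → Vtx X)
    (hgh : ∀ t, h (g t) = t) (w : Vtx X) :
    vtrFun v h (vtrFun v g w) = w := by
  by_cases hp : v <+: w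
  · obtain ⟨t, rfl⟩ := hp
    simp [vtrFun, List.drop_left, hgh, List.prefix_append]
  · simp [vtrFun, hp]

/-- The vtr `v*g`: the automorphism acting as `g` on the subtree rooted
at `v` and trivially elsewhere. -/
def vtr (v : Vtx X) (g : Equiv.Perm (Vtx X)) : Equiv.Perm (Vtx X) where
  toFun := vtrFun v g
  invFun := vtrFun v g.symm
  left_inv := vtr_aux v g g.symm fun t => g.symm_apply_apply t
  right_inv := vtr_aux v g.symm g fun t => g.apply_symm_apply t

lemma vtr_apply (v : Vtx X) (g : Equiv.Perm (Vtx X)) (w : Vtx X) :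
    vtr v g w = if v <+: w then v ++ g (w.drop v.length) else w := rfl

/-- `g ↦ v*g` as a group homomorphism. -/
def vtrHom (v : Vtx X) : Equiv.Perm (Vtx X) →* Equiv.Perm (Vtx X) where
  toFun := vtr v
  map_one' := by
    ext w
    by_cases hp : v <+: w
    · obtain ⟨t, rfl⟩ := hp
      simp [vtr, vtrFun, List.drop_left, List.prefix_append]
    · simp [vtr, vtrFun, hp]
  map_mul' := by
    intro a b
    ext w
    have hmul : (vtr v a * vtr v b) w = vtr v a (vtr v b w) := rfl
    rw [hmul]
    by_cases hp : v <+: w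
    · obtain ⟨t, rfl⟩ := hp
      simp [vtr, vtrFun, List.drop_left, List.prefix_append]
    · simp [vtr, vtrFun, hp]

/-- `K` is a branching subgroup of `G`: `K ≤ G` and `v*K ≤ K` for all vertices. -/
def IsBranching (G K : Subgroup (Equiv.Perm (Vtx X))) : Prop :=
  K ≤ G ∧ ∀ v : Vtx X, ∀ g ∈ K, vtr v g ∈ K

/-- The product `X^n * K` of the translates `v*K` over all vertices of level `n`. -/
def levelProd (K : Subgroup (Equiv.Perm (Vtx X))) (n : ℕ) :
    Subgroup (Equiv.Perm (Vtx X)) :=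
  Subgroup.closure {p | ∃ v : Vtx X, v.length = n ∧ ∃ g ∈ K, p = vtr v g}

/-- The group `G⋉v` of states at `v` of the rigid stabilizer:
those `g ∈ G` with `v*g ∈ G`. -/
def pristSub (G : Subgroup (Equiv.Perm (Vtx X))) (v : Vtx X) :
    Subgroup (Equiv.Perm (Vtx X)) :=
  G ⊓ G.comap (vtrHom v)

/-- `G_#`, the intersection of all `G⋉v` (the maximal branching subgroup when
`G` is regular branch). -/
def Gsharp (G : Subgroup (Equiv.Perm (Vtx X))) : Subgroup (Equiv.Perm (Vtx X)) :=
  ⨅ v : Vtx X, pristSub G v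

/-- `G` is self-similar: all states of elements of `G` are (induced by) elements of `G`. -/
def SelfSimilar (G : Subgroup (Equiv.Perm (Vtx X))) : Prop :=
  ∀ g ∈ G, ∀ w : Vtx X, ∃ h ∈ G, ∀ t : Vtx X, h t = stateFun g w t

/-- `G` is level-transitive: transitive on each level of the tree. -/
def LevelTransitive (G : Subgroup (Equiv.Perm (Vtx X))) : Prop :=
  ∀ v w : Vtx X, v.length = w.length → ∃ g ∈ G, g v = w

/-- `G` is recurrent: the state at `v` of the stabilizer of `v` is all of `G`. -/
def Recurrent (G : Subgroup (Equiv.Perm (Vtx X))) : Prop :=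
  ∀ v : Vtx X, ∀ h : Equiv.Perm (Vtx X),
    (h ∈ G ↔ ∃ g ∈ G, g v = v ∧ ∀ t : Vtx X, h t = stateFun g v t)

/-- `G` is a regular branch group (for this action): it has a non-trivial
branching subgroup `K` with all products `X^n*K` of finite index in `G`. -/
def RegularBranch (G : Subgroup (Equiv.Perm (Vtx X))) : Prop :=
  ∃ K : Subgroup (Equiv.Perm (Vtx X)), IsBranching G K ∧ K ≠ ⊥ ∧
    ∀ n : ℕ, ((levelProd K n).subgroupOf G).FiniteIndex

/-- The subgroup generated by `e`-th powers of elements of `H`. -/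
def powSubgroup {P : Type*} [Group P] (H : Subgroup P) (e : ℕ) : Subgroup P :=
  Subgroup.closure {x | ∃ h ∈ H, x = h ^ e}

/-- The normal closure of `g` in the subgroup `Γ`. -/
def nclosure {P : Type*} [Group P] (Γ : Subgroup P) (g : P) : Subgroup P :=
  Subgroup.closure {x | ∃ h ∈ Γ, x = h * g * h⁻¹}

/-- `g` is finite-state: it has only finitely many states. -/
def FiniteState (g : Equiv.Perm (Vtx X)) : Prop :=
  {f : Vtx X → Vtx X | ∃ w : Vtx X, f = stateFun g w}.Finite

/-- `g` fixes the boundary ray `y`, i.e. it fixes each of its finite prefixes. -/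
def fixesRay (g : Equiv.Perm (Vtx X)) (y : ℕ → X) : Prop :=
  ∀ n : ℕ, g ((List.range n).map y) = (List.range n).map y

end Tree

/-- A group satisfies a (non-trivial) group law. -/
def SatisfiesLaw (G : Type*) [Group G] : Prop :=
  ∃ w : FreeGroup ℕ, w ≠ 1 ∧ ∀ φ : FreeGroup ℕ →* G, φ w = 1
/-- σ = (1 2 3) acting on the first letter; the rooted automorphism `a`. -/
def aF : List (Fin 3) → List (Fin 3)
  | [] => []
  | x :: t => finRotate 3 x :: t

def aF' : List (Fin 3) → List (Fin 3)
  | [] => []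
  | x :: t => (finRotate 3).symm x :: t

lemma aF'_aF : ∀ t, aF' (aF t) = t := by
  intro t
  cases t with
  | nil => rfl
  | cons x t => simp only [aF, aF', Equiv.symm_apply_apply]

lemma aF_aF' : ∀ t, aF (aF' t) = t := by
  intro t
  cases t with
  | nil => rfl
  | cons x t => simp only [aF, aF', Equiv.apply_symm_apply]

/-- The recursively defined automorphism `b = (a, a⁻¹, b)`. -/
def bF : List (Fin 3) → List (Fin 3)
  | [] => []
  | x :: t => x :: (if x = 0 then aF t else if x = 1 then aF' t else bF t)

def bF' : List (Fin 3) → List (Fin 3)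
  | [] => []
  | x :: t => x :: (if x = 0 then aF' t else if x = 1 then aF t else bF' t)

lemma bF'_bF : ∀ t, bF' (bF t) = t := by
  intro t
  induction t with
  | nil => rfl
  | cons x t ih =>
      simp only [bF, bF']
      split_ifs <;> simp [aF'_aF, aF_aF', ih]

lemma bF_bF' : ∀ t, bF (bF' t) = t := by
  intro t
  induction t with
  | nil => rfl
  | cons x t ih =>
      simp only [bF, bF']
      split_ifs <;> simp [aF'_aF, aF_aF', ih]

/-- The recursively defined automorphism `c = (c, a, a⁻¹)`. -/
def cF : List (Fin 3) → List (Fin 3)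
  | [] => []
  | x :: t => x :: (if x = 0 then cF t else if x = 1 then aF t else aF' t)

def cF' : List (Fin 3) → List (Fin 3)
  | [] => []
  | x :: t => x :: (if x = 0 then cF' t else if x = 1 then aF' t else aF t)

lemma cF'_cF : ∀ t, cF' (cF t) = t := by
  intro t
  induction t with
  | nil => rfl
  | cons x t ih =>
      simp only [cF, cF']
      split_ifs <;> simp [aF'_aF, aF_aF', ih]

lemma cF_cF' : ∀ t, cF (cF' t) = t := by
  intro t
  induction t with
  | nil => rfl
  | cons x t ih =>
      simp only [cF, cF']
      split_ifs <;> simp [aF'_aF, aF_aF', ih]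

/-- The generator `a = σ_{123}` of Pervova's group. -/
def aP : Equiv.Perm (Vtx (Fin 3)) := ⟨aF, aF', aF'_aF, aF_aF'⟩

/-- The generator `b = (a, a⁻¹, b)` of Pervova's group. -/
def bP : Equiv.Perm (Vtx (Fin 3)) := ⟨bF, bF', bF'_bF, bF_bF'⟩

/-- The generator `c = (c, a, a⁻¹)` of Pervova's group. -/
def cP : Equiv.Perm (Vtx (Fin 3)) := ⟨cF, cF', cF'_cF, cF_cF'⟩

/-- Pervova's group `Γ = ⟨a, b, c⟩`. -/
def PervovaGroup : Subgroup (Equiv.Perm (Vtx (Fin 3))) :=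
  Subgroup.closure {aP, bP, cP}

open scoped commutatorElement

lemma perm_inv_apply_self {α : Type*} (f : Equiv.Perm α) (x : α) : f⁻¹ (f x) = x :=
  Equiv.symm_apply_apply f x

lemma perm_apply_inv_self {α : Type*} (f : Equiv.Perm α) (x : α) : f (f⁻¹ x) = x :=
  Equiv.apply_symm_apply f x

-- quick API checks appended to base
lemma aP_app (w : Vtx (Fin 3)) : aP w = aF w := rfl
lemma aP_inv_app (w : Vtx (Fin 3)) : aP⁻¹ w = aF' w := rfl
lemma bP_app (w : Vtx (Fin 3)) : bP w = bF w := rfl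
lemma bP_inv_app (w : Vtx (Fin 3)) : bP⁻¹ w = bF' w := rfl
lemma cP_app (w : Vtx (Fin 3)) : cP w = cF w := rfl
lemma cP_inv_app (w : Vtx (Fin 3)) : cP⁻¹ w = cF' w := rfl

lemma rot0 : finRotate 3 0 = 1 := by decide
lemma rot1 : finRotate 3 1 = 2 := by decide
lemma rot2 : finRotate 3 2 = 0 := by decide
lemma rot0' : (finRotate 3).symm 0 = 2 := by decide
lemma rot1' : (finRotate 3).symm 1 = 0 := by decide
lemma rot2' : (finRotate 3).symm 2 = 1 := by decide

lemma aF_aF (t : Vtx (Fin 3)) : aF (aF t) = aF' t := by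
  cases t with
  | nil => rfl
  | cons x t => simp only [aF, aF']; congr 1; fin_cases x <;> decide

lemma aF'_aF' (t : Vtx (Fin 3)) : aF' (aF' t) = aF t := by
  cases t with
  | nil => rfl
  | cons x t => simp only [aF, aF']; congr 1; fin_cases x <;> decide
set_option linter.unusedSectionVars false
section VtrBasics
variable {X : Type*} [DecidableEq X]

lemma vtr_nil (g : Equiv.Perm (Vtx X)) : vtr ([] : Vtx X) g = g := by
  ext w; simp [vtr_apply]

lemma vtr_head (x : X) (g : Equiv.Perm (Vtx X)) (t : Vtx X) :
    vtr [x] g (x :: t) = x :: g t := by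
  simp [vtr_apply, List.cons_prefix_cons]

lemma vtr_notpre {v : Vtx X} {w : Vtx X} (h : ¬ v <+: w) (g : Equiv.Perm (Vtx X)) :
    vtr v g w = w := by
  simp [vtr_apply, h]

lemma single_prefix {x : X} {w : Vtx X} : [x] <+: w ↔ ∃ t, w = x :: t := by
  cases w with
  | nil => simp
  | cons y t => simp [List.cons_prefix_cons, eq_comm]

lemma vtr_miss {x y : X} (h : y ≠ x) (g : Equiv.Perm (Vtx X)) (t : Vtx X) :
    vtr [x] g (y :: t) = y :: t := by
  apply vtr_notpre
  rw [List.cons_prefix_cons]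
  rintro ⟨hh, -⟩; exact h hh.symm

lemma vtr_nil_arg (x : X) (g : Equiv.Perm (Vtx X)) : vtr [x] g [] = [] := by
  apply vtr_notpre; simp

lemma vtr_cons (x : X) (v : Vtx X) (g : Equiv.Perm (Vtx X)) :
    vtr (x :: v) g = vtr [x] (vtr v g) := by
  ext w
  by_cases h1 : (x :: v) <+: w
  · obtain ⟨t, rfl⟩ := h1
    have : x :: v ++ t = x :: (v ++ t) := rfl
    rw [this, vtr_head]
    rw [vtr_apply]
    simp [List.cons_prefix_cons, List.prefix_append, vtr_apply, List.drop_left]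
  · rw [vtr_notpre h1]
    cases w with
    | nil => rw [vtr_nil_arg]
    | cons y t =>
        by_cases hy : y = x
        · subst hy
          have hv : ¬ v <+: t := fun hc => h1 (by simpa [List.cons_prefix_cons] using hc)
          rw [vtr_head, vtr_notpre hv]
        · rw [vtr_miss hy]

end VtrBasics
lemma aF_cons0 (t : Vtx (Fin 3)) : aF (0 :: t) = 1 :: t := by simp [aF]
lemma aF_cons1 (t : Vtx (Fin 3)) : aF (1 :: t) = 2 :: t := by simp [aF]
lemma aF_cons2 (t : Vtx (Fin 3)) : aF (2 :: t) = 0 :: t := by simp [aF]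
lemma aF'_cons0 (t : Vtx (Fin 3)) : aF' (0 :: t) = 2 :: t := by simp [aF']; decide
lemma aF'_cons1 (t : Vtx (Fin 3)) : aF' (1 :: t) = 0 :: t := by simp [aF']
lemma aF'_cons2 (t : Vtx (Fin 3)) : aF' (2 :: t) = 1 :: t := by simp [aF']
lemma bF_cons0 (t : Vtx (Fin 3)) : bF (0 :: t) = 0 :: aF t := by simp [bF]
lemma bF_cons1 (t : Vtx (Fin 3)) : bF (1 :: t) = 1 :: aF' t := by simp [bF]
lemma bF_cons2 (t : Vtx (Fin 3)) : bF (2 :: t) = 2 :: bF t := by simp [bF]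
lemma bF'_cons0 (t : Vtx (Fin 3)) : bF' (0 :: t) = 0 :: aF' t := by simp [bF']
lemma bF'_cons1 (t : Vtx (Fin 3)) : bF' (1 :: t) = 1 :: aF t := by simp [bF']
lemma bF'_cons2 (t : Vtx (Fin 3)) : bF' (2 :: t) = 2 :: bF' t := by simp [bF']
lemma cF_cons0 (t : Vtx (Fin 3)) : cF (0 :: t) = 0 :: cF t := by simp [cF]
lemma cF_cons1 (t : Vtx (Fin 3)) : cF (1 :: t) = 1 :: aF t := by simp [cF]
lemma cF_cons2 (t : Vtx (Fin 3)) : cF (2 :: t) = 2 :: aF' t := by simp [cF]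
lemma cF'_cons0 (t : Vtx (Fin 3)) : cF' (0 :: t) = 0 :: cF' t := by simp [cF']
lemma cF'_cons1 (t : Vtx (Fin 3)) : cF' (1 :: t) = 1 :: aF' t := by simp [cF']
lemma cF'_cons2 (t : Vtx (Fin 3)) : cF' (2 :: t) = 2 :: aF t := by simp [cF']
lemma aF_nil : aF ([] : Vtx (Fin 3)) = [] := rfl
lemma aF'_nil : aF' ([] : Vtx (Fin 3)) = [] := rfl
lemma bF_nil : bF ([] : Vtx (Fin 3)) = [] := rfl
lemma bF'_nil : bF' ([] : Vtx (Fin 3)) = [] := rfl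
lemma cF_nil : cF ([] : Vtx (Fin 3)) = [] := rfl
lemma cF'_nil : cF' ([] : Vtx (Fin 3)) = [] := rfl
lemma vtr0_eval (x : Fin 3) (g : Equiv.Perm (Vtx (Fin 3))) (t : Vtx (Fin 3)) :
    vtr [(0 : Fin 3)] g (x :: t) = if x = 0 then 0 :: g t else x :: t := by
  by_cases h : x = 0
  · subst h; rw [if_pos rfl, vtr_head]
  · rw [if_neg h, vtr_miss h]

attribute [local simp] commutatorElement_def Equiv.Perm.mul_apply
  aP_app aP_inv_app bP_app bP_inv_app cP_app cP_inv_app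
  aF_cons0 aF_cons1 aF_cons2 aF'_cons0 aF'_cons1 aF'_cons2
  bF_cons0 bF_cons1 bF_cons2 bF'_cons0 bF'_cons1 bF'_cons2
  cF_cons0 cF_cons1 cF_cons2 cF'_cons0 cF'_cons1 cF'_cons2
  aF_nil aF'_nil bF_nil bF'_nil cF_nil cF'_nil
  aF_aF' aF'_aF aF_aF aF'_aF' bF_bF' bF'_bF cF_cF' cF'_cF vtr0_eval

lemma id_bc : vtr [(0 : Fin 3)] ⁅bP, cP⁆ = ⁅aP⁻¹ * aP⁻¹ * bP * aP * aP, cP⁆ := by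
  refine Equiv.ext fun w => ?_
  rcases w with _ | ⟨x, t⟩
  · simp [vtr_nil_arg]
  · fin_cases x <;> simp

lemma id_ab : vtr [(0 : Fin 3)] ⁅aP, bP⁆ =
    ⁅bP * (aP⁻¹ * aP⁻¹ * bP * aP * aP), bP * (aP⁻¹ * bP⁻¹ * aP)⁆ := by
  refine Equiv.ext fun w => ?_
  rcases w with _ | ⟨x, t⟩
  · simp [vtr_nil_arg]
  · fin_cases x <;> simp

lemma id_ac : vtr [(0 : Fin 3)] ⁅aP, cP⁆ =
    ⁅bP * cP, bP * (aP⁻¹ * bP⁻¹ * aP)⁆ := by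
  refine Equiv.ext fun w => ?_
  rcases w with _ | ⟨x, t⟩
  · simp [vtr_nil_arg]
  · fin_cases x <;> simp
local notation "Γ" => PervovaGroup
local notation "Γ'" => ⁅PervovaGroup, PervovaGroup⁆

lemma haP : aP ∈ Γ := Subgroup.subset_closure (by simp)
lemma hbP : bP ∈ Γ := Subgroup.subset_closure (by simp)
lemma hcP : cP ∈ Γ := Subgroup.subset_closure (by simp)

lemma conj_mem_comm {γ x : Equiv.Perm (Vtx (Fin 3))} (hγ : γ ∈ Γ) (hx : x ∈ Γ') :
    γ * x * γ⁻¹ ∈ Γ' := by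
  rw [Subgroup.commutator_def] at hx
  induction hx using Subgroup.closure_induction with
  | mem y hy =>
      obtain ⟨g₁, h₁, g₂, h₂, rfl⟩ := hy
      have : γ * ⁅g₁, g₂⁆ * γ⁻¹ = ⁅γ * g₁ * γ⁻¹, γ * g₂ * γ⁻¹⁆ := by
        simp [commutatorElement_def]; group
      rw [this]
      exact Subgroup.commutator_mem_commutator
        (mul_mem (mul_mem hγ h₁) (inv_mem hγ)) (mul_mem (mul_mem hγ h₂) (inv_mem hγ))
  | one => simpa using one_mem _
  | mul y z _ _ py pz =>
      have : γ * (y * z) * γ⁻¹ = (γ * y * γ⁻¹) * (γ * z * γ⁻¹) := by group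
      rw [this]; exact mul_mem py pz
  | inv y _ py =>
      have : γ * y⁻¹ * γ⁻¹ = (γ * y * γ⁻¹)⁻¹ := by group
      rw [this]; exact inv_mem py

/-- Recurrence at the vertex 0. -/
lemma recur {g : Equiv.Perm (Vtx (Fin 3))} (hg : g ∈ Γ) :
    ∃ γ ∈ Γ, ∀ w, γ ((0 : Fin 3) :: w) = (0 : Fin 3) :: g w := by
  have hg' : g ∈ Subgroup.closure {aP, bP, cP} := hg
  clear hg
  induction hg' using Subgroup.closure_induction with
  | mem s hs =>
      rcases hs with rfl | rfl | rfl
      · exact ⟨bP, hbP, fun w => by simp [bP_app, bF_cons0, aP_app]⟩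
      · refine ⟨aP * bP * aP⁻¹, mul_mem (mul_mem haP hbP) (inv_mem haP), fun w => ?_⟩
        simp [Equiv.Perm.mul_apply, aP_app, aP_inv_app, aF'_cons0, bP_app, bF_cons2, aF_cons2]
      · exact ⟨cP, hcP, fun w => by simp [cP_app, cF_cons0]⟩
  | one => exact ⟨1, one_mem _, fun w => rfl⟩
  | mul y z _ _ py pz =>
      obtain ⟨γ₁, m1, e1⟩ := py
      obtain ⟨γ₂, m2, e2⟩ := pz
      exact ⟨γ₁ * γ₂, mul_mem m1 m2, fun w => by
        rw [Equiv.Perm.mul_apply, e2, e1, Equiv.Perm.mul_apply]⟩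
  | inv y _ py =>
      obtain ⟨γ, m, e⟩ := py
      refine ⟨γ⁻¹, inv_mem m, fun w => ?_⟩
      have h1 : γ ((0 : Fin 3) :: y⁻¹ w) = (0 : Fin 3) :: w := by
        rw [e, perm_apply_inv_self]
      rw [← h1, perm_inv_apply_self]

/-- Elements fixing the 0-subtree pointwise commute with `vtr [0] h`. -/
lemma commute_vtr0 {u : Equiv.Perm (Vtx (Fin 3))}
    (hu : ∀ w, u ((0 : Fin 3) :: w) = (0 : Fin 3) :: w) (h : Equiv.Perm (Vtx (Fin 3))) :
    u * vtr [(0 : Fin 3)] h = vtr [(0 : Fin 3)] h * u := by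
  have key : ∀ w, ¬ (∃ t, w = (0 : Fin 3) :: t) → ¬ ∃ t, u w = (0 : Fin 3) :: t := by
    rintro w hw ⟨t, ht⟩
    exact hw ⟨t, u.injective (by rw [ht, hu])⟩
  refine Equiv.ext fun w => ?_
  by_cases hw : ∃ t, w = (0 : Fin 3) :: t
  · obtain ⟨t, rfl⟩ := hw
    simp [Equiv.Perm.mul_apply, vtr_head, hu]
  · have h1 : vtr [(0 : Fin 3)] h w = w := vtr_notpre (fun hp => hw (single_prefix.mp hp)) h
    have h2 : vtr [(0 : Fin 3)] h (u w) = u w :=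
      vtr_notpre (fun hp => key w hw (single_prefix.mp hp)) h
    rw [Equiv.Perm.mul_apply, Equiv.Perm.mul_apply, h1, h2]

/-- Conjugation inside `vtr [0]` can be realised by conjugation by an element of `Γ`. -/
lemma conj_vtr0 {g : Equiv.Perm (Vtx (Fin 3))} (hg : g ∈ Γ) (x : Equiv.Perm (Vtx (Fin 3))) :
    ∃ γ ∈ Γ, vtr [(0 : Fin 3)] (g * x * g⁻¹) = γ * vtr [(0 : Fin 3)] x * γ⁻¹ := by
  obtain ⟨γ, hγ, e⟩ := recur hg
  refine ⟨γ, hγ, Eq.symm ?_⟩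
  set V := vtrHom ([(0 : Fin 3)] : Vtx (Fin 3)) with hV
  have hVapp : ∀ y, vtr [(0 : Fin 3)] y = V y := fun y => rfl
  set u : Equiv.Perm (Vtx (Fin 3)) := γ * (vtr [(0 : Fin 3)] g)⁻¹ with hu
  have hufix : ∀ w, u ((0 : Fin 3) :: w) = (0 : Fin 3) :: w := by
    intro w
    have h1 : (vtr [(0 : Fin 3)] g)⁻¹ ((0 : Fin 3) :: w) = (0 : Fin 3) :: g⁻¹ w := by
      have := vtr_head (0 : Fin 3) g (g⁻¹ w)
      rw [perm_apply_inv_self] at this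
      rw [← this, perm_inv_apply_self]
    rw [hu, Equiv.Perm.mul_apply, h1, e, perm_apply_inv_self]
  have hγeq : γ = u * vtr [(0 : Fin 3)] g := by rw [hu]; group
  calc γ * vtr [(0 : Fin 3)] x * γ⁻¹
      = u * (V g * V x * (V g)⁻¹) * u⁻¹ := by rw [hγeq, hVapp, hVapp]; group
    _ = u * V (g * x * g⁻¹) * u⁻¹ := by rw [map_mul, map_mul, map_inv]
    _ = V (g * x * g⁻¹) * u * u⁻¹ := by
        rw [← hVapp, commute_vtr0 hufix (g * x * g⁻¹), hVapp]
    _ = vtr [(0 : Fin 3)] (g * x * g⁻¹) := by rw [mul_assoc, mul_inv_cancel, mul_one, hVapp]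
section CommIdent
variable {G : Type*} [Group G]

lemma comm_mul_right (s y z : G) : ⁅s, y * z⁆ = ⁅s, y⁆ * (y * ⁅s, z⁆ * y⁻¹) := by
  rw [commutatorElement_def, commutatorElement_def, commutatorElement_def]; group

lemma comm_inv_right (s y : G) : ⁅s, y⁻¹⁆ = y⁻¹ * ⁅s, y⁆⁻¹ * y := by
  rw [commutatorElement_def, commutatorElement_def]; group

lemma comm_mul_left (y z h : G) : ⁅y * z, h⁆ = (y * ⁅z, h⁆ * y⁻¹) * ⁅y, h⁆ := by
  rw [commutatorElement_def, commutatorElement_def, commutatorElement_def]; group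

lemma comm_inv_left (y h : G) : ⁅y⁻¹, h⁆ = y⁻¹ * ⁅y, h⁆⁻¹ * y := by
  rw [commutatorElement_def, commutatorElement_def]; group

end CommIdent

lemma vtr0_mul (x y : Equiv.Perm (Vtx (Fin 3))) :
    vtr [(0 : Fin 3)] (x * y) = vtr [(0 : Fin 3)] x * vtr [(0 : Fin 3)] y :=
  map_mul (vtrHom [(0 : Fin 3)]) x y

lemma vtr0_inv (x : Equiv.Perm (Vtx (Fin 3))) :
    vtr [(0 : Fin 3)] x⁻¹ = (vtr [(0 : Fin 3)] x)⁻¹ :=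
  map_inv (vtrHom [(0 : Fin 3)]) x

lemma vtr0_one : vtr [(0 : Fin 3)] (1 : Equiv.Perm (Vtx (Fin 3))) = 1 :=
  map_one (vtrHom [(0 : Fin 3)])

lemma base_pairs : ∀ s ∈ ({aP, bP, cP} : Set (Equiv.Perm (Vtx (Fin 3)))),
    ∀ t ∈ ({aP, bP, cP} : Set (Equiv.Perm (Vtx (Fin 3)))),
    vtr [(0 : Fin 3)] ⁅s, t⁆ ∈ Γ' := by
  have m1 : aP⁻¹ * aP⁻¹ * bP * aP * aP ∈ Γ :=
    mul_mem (mul_mem (mul_mem (mul_mem (inv_mem haP) (inv_mem haP)) hbP) haP) haP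
  have m2 : bP * (aP⁻¹ * bP⁻¹ * aP) ∈ Γ :=
    mul_mem hbP (mul_mem (mul_mem (inv_mem haP) (inv_mem hbP)) haP)
  have hab : vtr [(0 : Fin 3)] ⁅aP, bP⁆ ∈ Γ' := by
    rw [id_ab]; exact Subgroup.commutator_mem_commutator (mul_mem hbP m1) m2
  have hac : vtr [(0 : Fin 3)] ⁅aP, cP⁆ ∈ Γ' := by
    rw [id_ac]; exact Subgroup.commutator_mem_commutator (mul_mem hbP hcP) m2
  have hbc : vtr [(0 : Fin 3)] ⁅bP, cP⁆ ∈ Γ' := by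
    rw [id_bc]; exact Subgroup.commutator_mem_commutator m1 hcP
  have flip : ∀ s t : Equiv.Perm (Vtx (Fin 3)),
      vtr [(0 : Fin 3)] ⁅s, t⁆ ∈ Γ' → vtr [(0 : Fin 3)] ⁅t, s⁆ ∈ Γ' := by
    intro s t h
    rw [← commutatorElement_inv, vtr0_inv]
    exact inv_mem h
  rintro s (rfl | rfl | rfl) t (rfl | rfl | rfl)
  · rw [commutatorElement_self, vtr0_one]; exact one_mem _
  · exact hab
  · exact hac
  · exact flip _ _ hab
  · rw [commutatorElement_self, vtr0_one]; exact one_mem _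
  · exact hbc
  · exact flip _ _ hac
  · exact flip _ _ hbc
  · rw [commutatorElement_self, vtr0_one]; exact one_mem _

lemma main_comm : ∀ g ∈ Γ, ∀ h ∈ Γ, vtr [(0 : Fin 3)] ⁅g, h⁆ ∈ Γ' := by
  intro g hg
  have hg' : g ∈ Subgroup.closure {aP, bP, cP} := hg
  clear hg
  induction hg' using Subgroup.closure_induction with
  | mem s hs =>
      intro h hh
      have hh' : h ∈ Subgroup.closure {aP, bP, cP} := hh
      clear hh
      induction hh' using Subgroup.closure_induction with
      | mem t ht => exact base_pairs s hs t ht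
      | one => rw [commutatorElement_one_right, vtr0_one]; exact one_mem _
      | mul y z hy hz py pz =>
          rw [comm_mul_right, vtr0_mul]
          refine mul_mem py ?_
          obtain ⟨γ, hγ, e⟩ := conj_vtr0 hy ⁅s, z⁆
          rw [e]
          exact conj_mem_comm hγ pz
      | inv y hy py =>
          rw [comm_inv_right]
          have h2 : y⁻¹ * ⁅s, y⁆⁻¹ * y = y⁻¹ * ⁅s, y⁆⁻¹ * (y⁻¹)⁻¹ := by rw [inv_inv]
          rw [h2]
          obtain ⟨γ, hγ, e⟩ := conj_vtr0 (inv_mem hy) ⁅s, y⁆⁻¹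
          rw [e, vtr0_inv]
          exact conj_mem_comm hγ (inv_mem py)
  | one =>
      intro h hh
      rw [commutatorElement_one_left, vtr0_one]; exact one_mem _
  | mul y z hy hz py pz =>
      intro h hh
      rw [comm_mul_left, vtr0_mul]
      refine mul_mem ?_ (py h hh)
      obtain ⟨γ, hγ, e⟩ := conj_vtr0 hy ⁅z, h⁆
      rw [e]
      exact conj_mem_comm hγ (pz h hh)
  | inv y hy py =>
      intro h hh
      rw [comm_inv_left]
      have h2 : y⁻¹ * ⁅y, h⁆⁻¹ * y = y⁻¹ * ⁅y, h⁆⁻¹ * (y⁻¹)⁻¹ := by rw [inv_inv]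
      rw [h2]
      obtain ⟨γ, hγ, e⟩ := conj_vtr0 (inv_mem hy) ⁅y, h⁆⁻¹
      rw [e, vtr0_inv]
      exact conj_mem_comm hγ (inv_mem (py h hh))

lemma level0 : ∀ x ∈ Γ', vtr [(0 : Fin 3)] x ∈ Γ' := by
  intro x hx
  have hle : Γ' ≤ Subgroup.comap (vtrHom [(0 : Fin 3)]) Γ' := by
    rw [Subgroup.commutator_le]
    intro g hg h hh
    rw [Subgroup.mem_comap]
    exact main_comm g hg h hh
  exact hle hx
lemma aconj (x : Fin 3) (g : Equiv.Perm (Vtx (Fin 3))) :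
    vtr [finRotate 3 x] g = aP * vtr [x] g * aP⁻¹ := by
  refine Equiv.ext fun w => ?_
  rcases w with _ | ⟨y, t⟩
  · rw [vtr_nil_arg]
    have h0 : aP⁻¹ ([] : Vtx (Fin 3)) = [] := rfl
    rw [Equiv.Perm.mul_apply, Equiv.Perm.mul_apply, h0, vtr_nil_arg]; rfl
  · rw [Equiv.Perm.mul_apply, Equiv.Perm.mul_apply]
    have h1 : aP⁻¹ (y :: t) = (finRotate 3).symm y :: t := by
      rw [aP_inv_app]; cases t <;> rfl
    rw [h1]
    by_cases hy : (finRotate 3).symm y = x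
    · have hyx : y = finRotate 3 x := by rw [← hy, Equiv.apply_symm_apply]
      subst hyx
      rw [hy, vtr_head, vtr_head, aP_app]
      cases (g t) <;> simp [aF, Equiv.apply_symm_apply]
    · have hyx : y ≠ finRotate 3 x := fun hc => hy (by rw [hc, Equiv.symm_apply_apply])
      rw [vtr_miss hy, vtr_miss hyx, aP_app]
      cases t <;> simp [aF, Equiv.apply_symm_apply]

lemma level1 (x : Fin 3) : ∀ g ∈ Γ', vtr [x] g ∈ Γ' := by
  intro g hg
  have h1 : ∀ y ∈ Γ', aP * y * aP⁻¹ ∈ Γ' := fun y hy => conj_mem_comm haP hy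
  fin_cases x
  · exact level0 g hg
  · show vtr [(1 : Fin 3)] g ∈ Γ'
    rw [show [(1 : Fin 3)] = [finRotate 3 0] by rw [rot0], aconj]
    exact h1 _ (level0 g hg)
  · show vtr [(2 : Fin 3)] g ∈ Γ'
    rw [show [(2 : Fin 3)] = [finRotate 3 1] by rw [rot1], aconj]
    rw [show [(1 : Fin 3)] = [finRotate 3 0] by rw [rot0], aconj]
    exact h1 _ (h1 _ (level0 g hg))

theorem pervova_regular_branch_over_commutator' :
    ∀ v : Vtx (Fin 3), ∀ g ∈ ⁅PervovaGroup, PervovaGroup⁆,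
      vtr v g ∈ ⁅PervovaGroup, PervovaGroup⁆ := by
  intro v
  induction v with
  | nil => intro g hg; rwa [vtr_nil]
  | cons x v ih =>
      intro g hg
      rw [vtr_cons]
      exact level1 x _ (ih g hg)

/-- Pervova's group is regular branch over its commutator
subgroup: `Γ'` contains `v*Γ'` for every vertex `v`. -/
theorem pervova_regular_branch_over_commutator :
    ∀ v : Vtx (Fin 3), ∀ g ∈ ⁅PervovaGroup, PervovaGroup⁆,
      vtr v g ∈ ⁅PervovaGroup, PervovaGroup⁆ := by
  exact pervova_regular_branch_over_commutator'
end

section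
/- Let V = {1, u, v, uv} be the Klein four-group acting on Ẑ³ (Ẑ the profinite completion of ℤ) so that u acts by (α,β,γ) ↦ (−α, β, −γ) (and cyclic analogues for v, uv). Then any extension 1 → Ẑ³ → K → V → 1 realizing this action, in which some lift x of u satisfies x² = e^{2β+1} for the middle basis vector e and some β ∈ Ẑ (as in the Hanoi group congruence kernel), is torsion-free; in particular every lift of u to K has infinite order and the extension does not split. -/
instance (p : Nat.Primes) : Fact (Nat.Prime p) := ⟨p.2⟩

/-- The profinite completion `Ẑ` of `ℤ`, realized as the product of all rings
of `p`-adic integers. -/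
abbrev Zhat : Type := ∀ p : Nat.Primes, PadicInt p

/-- The half-turn involution `σ(α, β, γ) = (-α, β, -γ)` of `Ẑ³`. -/
noncomputable def halfTurn (m : Zhat × Zhat × Zhat) : Zhat × Zhat × Zhat :=
  (-m.1, m.2.1, -m.2.2)

/-- `Ẑ` is torsion-free as an additive group. -/
lemma Zhat.nsmul_eq_zero {n : ℕ} (hn : 0 < n) {a : Zhat} (h : n • a = 0) : a = 0 := by
  funext p
  have := congrFun h p
  simp only [Pi.smul_apply, Pi.zero_apply, nsmul_eq_mul] at this
  exact (mul_eq_zero.mp this).resolve_left (Nat.cast_ne_zero.mpr hn.ne')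

/-- An odd element of `Ẑ` is nonzero. -/
lemma Zhat.odd_ne_zero (t : Zhat) : 2 * t + 1 ≠ 0 := by
  intro h
  set p : Nat.Primes := ⟨2, Nat.prime_two⟩ with hp
  have h2 : (2 : PadicInt p) * t p + 1 = 0 := by simpa using congrFun h p
  have h3 := congrArg (PadicInt.toZMod) h2
  have h4 : (PadicInt.toZMod (2 : PadicInt p)) = 0 := by
    have e : ((2 : ℕ) : PadicInt p) = (2 : PadicInt p) := by norm_cast
    rw [← e, map_natCast]; rfl
  simp only [map_add, map_mul, map_one, map_zero, h4, zero_mul, zero_add] at h3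
  exact one_ne_zero h3

/-- `Ẑ³` is torsion-free. -/
lemma Zhat3.nsmul_eq_zero {n : ℕ} (hn : 0 < n) {a : Zhat × Zhat × Zhat}
    (h : n • a = 0) : a = 0 := by
  obtain ⟨a1, a2, a3⟩ := a
  have h1 := congrArg Prod.fst h
  have h2 := congrArg (fun z => z.2.1) h
  have h3 := congrArg (fun z => z.2.2) h
  simp only [Prod.smul_fst, Prod.smul_snd, Prod.fst_zero, Prod.snd_zero] at h1 h2 h3
  have e1 := Zhat.nsmul_eq_zero hn h1
  have e2 := Zhat.nsmul_eq_zero hn h2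
  have e3 := Zhat.nsmul_eq_zero hn h3
  simp_all [Prod.ext_iff]

/-- let `K` be a group containing a normal subgroup `M` of index 2
isomorphic (via `φ`) to `Ẑ³`, such that conjugation by any element outside `M`
acts on `M ≅ Ẑ³` as the half-turn `σ(α,β,γ) = (-α,β,-γ)`, and such that some
`x ∉ M` satisfies `x² = e^{2β+1}` (the middle basis vector to an odd power).
Then `K` is torsion-free; in particular every element outside `M` (every lift
of the involution `u`) has infinite order. -/
theorem hanoi_kernel_extension_torsion_free
    (K : Type*) [Group K] (M : Subgroup K) (hnorm : M.Normal)
    (hidx : M.index = 2)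
    (φ : M ≃* Multiplicative (Zhat × Zhat × Zhat))
    (hact : ∀ x : K, x ∉ M → ∀ m : M,
      φ ⟨x * (m : K) * x⁻¹, hnorm.conj_mem (m : K) m.2 x⟩ =
        Multiplicative.ofAdd (halfTurn (Multiplicative.toAdd (φ m))))
    (x : K) (hx : x ∉ M) (hx2 : x ^ 2 ∈ M) (β : Zhat)
    (hxsq : φ ⟨x ^ 2, hx2⟩ = Multiplicative.ofAdd (0, 2 * β + 1, 0)) :
    (∀ k : K, k ≠ 1 → ∀ n : ℕ, 0 < n → k ^ n ≠ 1) ∧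
    (∀ y : K, y ∉ M → ∀ n : ℕ, 0 < n → y ^ n ≠ 1) := by
  -- M is torsion-free
  have hMtf : ∀ m : M, ∀ n : ℕ, 0 < n → m ^ n = 1 → m = 1 := by
    intro m n hn hmn
    have h1 : φ m ^ n = 1 := by rw [← map_pow, hmn, map_one]
    have h0 : n • Multiplicative.toAdd (φ m) = 0 := by
      have := congrArg Multiplicative.toAdd h1
      simpa using this
    have h2 : Multiplicative.toAdd (φ m) = 0 := Zhat3.nsmul_eq_zero hn h0
    apply φ.injective
    rw [map_one]
    have : φ m = Multiplicative.ofAdd 0 := by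
      rw [← h2]; rfl
    simpa using this
  have part2 : ∀ y : K, y ∉ M → ∀ n : ℕ, 0 < n → y ^ n ≠ 1 := by
    intro y hy n hn hyn
    have hy2 : y ^ 2 ∈ M := Subgroup.sq_mem_of_index_two hidx y
    have hk : y * x⁻¹ ∈ M := by
      rw [Subgroup.mul_mem_iff_of_index_two hidx]
      simp [M.inv_mem_iff, hy, hx]
    let m1 : M := ⟨y * x⁻¹, hk⟩
    let m2 : M := ⟨x * (m1 : K) * x⁻¹, hnorm.conj_mem (m1 : K) m1.2 x⟩
    let m3 : M := ⟨x ^ 2, hx2⟩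
    have hprod : m1 * m2 * m3 = (⟨y ^ 2, hy2⟩ : M) := by
      apply Subtype.ext
      show (y * x⁻¹) * (x * (y * x⁻¹) * x⁻¹) * x ^ 2 = y ^ 2
      rw [pow_two, pow_two]
      group
    have hφ : φ ⟨y ^ 2, hy2⟩ = φ m1 * φ m2 * φ m3 := by
      rw [← hprod, map_mul, map_mul]
    have hφ2 : φ m2 = Multiplicative.ofAdd (halfTurn (Multiplicative.toAdd (φ m1))) :=
      hact x hx m1
    have hφ3 : φ m3 = Multiplicative.ofAdd (0, 2 * β + 1, 0) := hxsq
    rw [hφ2, hφ3] at hφ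
    have hφy2 : Multiplicative.toAdd (φ ⟨y ^ 2, hy2⟩) =
        (0, 2 * ((Multiplicative.toAdd (φ m1)).2.1 + β) + 1, 0) := by
      have := congrArg Multiplicative.toAdd hφ
      simp only [toAdd_mul, toAdd_ofAdd] at this
      rw [this]
      obtain ⟨a1, a2, a3⟩ := Multiplicative.toAdd (φ m1)
      simp only [halfTurn, Prod.mk_add_mk]
      refine Prod.ext (by simp) (Prod.ext (by dsimp; ring) (by simp))
    have hy2ne : (⟨y ^ 2, hy2⟩ : M) ≠ 1 := by
      intro h
      have h1 := congrArg Multiplicative.toAdd (congrArg φ h)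
      rw [map_one] at h1
      simp only [hφy2] at h1
      have h21 := congrArg (fun z => z.2.1) h1
      simpa using Zhat.odd_ne_zero _ h21
    rcases Nat.even_or_odd n with ⟨m, hm⟩ | ⟨m, hm⟩
    · have hmpos : 0 < m := by omega
      have : (⟨y ^ 2, hy2⟩ : M) ^ m = 1 := by
        apply Subtype.ext
        show (y ^ 2) ^ m = 1
        rw [← pow_mul]
        rw [hm] at hyn
        convert hyn using 2
        omega
      exact hy2ne (hMtf _ m hmpos this)
    · apply hy
      have h2m : y ^ (2 * m) ∈ M := by
        rw [pow_mul]
        exact pow_mem hy2 m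
      have : y = (y ^ (2 * m))⁻¹ := by
        rw [hm, pow_succ] at hyn
        exact eq_inv_of_mul_eq_one_right hyn
      rw [this]
      exact M.inv_mem h2m
  refine ⟨fun k hk1 n hn hkn => ?_, part2⟩
  by_cases hkM : k ∈ M
  · have : (⟨k, hkM⟩ : M) ^ n = 1 := Subtype.ext (by simpa using hkn)
    exact hk1 (congrArg Subtype.val (hMtf ⟨k, hkM⟩ n hn this))
  · exact part2 k hkM n hn hkn
end

section
/- Let Γ be a group acting on a rooted tree, and suppose the filter of finite-index normal subgroups of Γ and the filter {rist_Γ(n)' · rist_Γ(n)^e : n, e ∈ ℕ} are cofinal (every member of one contains a member of the other). Then the branch kernel ker(Γ̂ → Γ̃), the kernel of the natural map from the profinite completion of Γ to the completion of Γ with respect to the subgroups rist_Γ(n), is Abelian. Moreover, if there is e ≥ 1 with rist_Γ(n)/rist_Γ(n)' of exponent dividing e for all n, then this kernel has exponent dividing e. -/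
open List

section Completions

variable (G : Type*) [Group G]

/-- The index set of the profinite completion: finite-index normal subgroups. -/
abbrev FIN : Type _ := {N : Subgroup G // N.Normal ∧ N.FiniteIndex}

instance FIN.normal {H : Type*} [Group H] (N : FIN H) : N.1.Normal := N.2.1

/-- The profinite completion of `G`, realized as the subgroup of compatible
tuples in the product of all finite quotients of `G`. -/
def ProfinComp : Subgroup (∀ N : FIN G, G ⧸ N.1) where
  carrier := {x | ∀ (N M : FIN G) (h : N.1 ≤ M.1),
    QuotientGroup.map N.1 M.1 (MonoidHom.id G) (by simpa using h) (x N) = x M}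
  one_mem' := by intro N M h; simp
  mul_mem' := by
    intro a b ha hb N M h
    simp only [Pi.mul_apply, map_mul, ha N M h, hb N M h]
  inv_mem' := by
    intro a ha N M h
    simp only [Pi.inv_apply, map_inv, ha N M h]

end Completions

variable {X : Type*} [DecidableEq X] [Fintype X]

/-- The normal core in `Γ` of the `n`-th level rigid stabilizer; the branch
(= rigid-stabilizer) topology on `Γ` is generated by these subgroups, so the
branch completion is the inverse limit of the quotients by them, and the branch
kernel `ker(Γ̂ → Γ̃)` consists of the elements of the profinite completion
whose coordinates at all these subgroups are trivial. -/
abbrev ristCore (Γ : Subgroup (Equiv.Perm (Vtx X))) (n : ℕ) : Subgroup ↥Γ :=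
  ((ristLevel Γ n).subgroupOf Γ).normalCore

/-- if the filter of finite-index normal subgroups of `Γ` is
cofinal with the filter of the subgroups `rist_Γ(n)' ⬝ rist_Γ(n)^e`, then the
branch kernel, i.e. the kernel of the natural map from the profinite completion
of `Γ` to its branch completion, is Abelian; and if moreover all quotients
`rist_Γ(n)/rist_Γ(n)'` have exponent dividing `e`, the branch kernel has
exponent dividing `e`. -/
theorem branch_kernel_abelian
    (Γ : Subgroup (Equiv.Perm (Vtx X))) (hAut : ∀ g ∈ Γ, IsTreeAut g)
    (hbr : ∀ n : ℕ, ((ristLevel Γ n).subgroupOf Γ).FiniteIndex)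
    (hcof₁ : ∀ N : Subgroup ↥Γ, N.Normal → N.FiniteIndex →
      ∃ n e : ℕ, ⁅(ristLevel Γ n).subgroupOf Γ, (ristLevel Γ n).subgroupOf Γ⁆ ⊔
        powSubgroup ((ristLevel Γ n).subgroupOf Γ) e ≤ N)
    (hcof₂ : ∀ n e : ℕ, ∃ N : Subgroup ↥Γ, N.Normal ∧ N.FiniteIndex ∧
      N ≤ ⁅(ristLevel Γ n).subgroupOf Γ, (ristLevel Γ n).subgroupOf Γ⁆ ⊔
        powSubgroup ((ristLevel Γ n).subgroupOf Γ) e) :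
    (∀ a b : ↥(ProfinComp ↥Γ),
      (∀ n : ℕ, (a : ∀ N : FIN ↥Γ, ↥Γ ⧸ N.1)
        ⟨ristCore Γ n, Subgroup.normalCore_normal _,
          @Subgroup.finiteIndex_normalCore _ _ _ (hbr n)⟩ = 1) →
      (∀ n : ℕ, (b : ∀ N : FIN ↥Γ, ↥Γ ⧸ N.1)
        ⟨ristCore Γ n, Subgroup.normalCore_normal _,
          @Subgroup.finiteIndex_normalCore _ _ _ (hbr n)⟩ = 1) →
      a * b = b * a) ∧
    (∀ e : ℕ, 1 ≤ e →
      (∀ n : ℕ, ∀ x ∈ (ristLevel Γ n).subgroupOf Γ,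
        x ^ e ∈ ⁅(ristLevel Γ n).subgroupOf Γ, (ristLevel Γ n).subgroupOf Γ⁆) →
      ∀ a : ↥(ProfinComp ↥Γ),
        (∀ n : ℕ, (a : ∀ N : FIN ↥Γ, ↥Γ ⧸ N.1)
          ⟨ristCore Γ n, Subgroup.normalCore_normal _,
            @Subgroup.finiteIndex_normalCore _ _ _ (hbr n)⟩ = 1) →
        a ^ e = 1) := by
  -- auxiliary: produce from a kernel element and a coordinate N a representative
  -- lying in ristCore Γ n, whose class mod N is the N-coordinate.
  have key : ∀ (a : ↥(ProfinComp ↥Γ)),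
      (∀ n : ℕ, (a : ∀ N : FIN ↥Γ, ↥Γ ⧸ N.1)
        ⟨ristCore Γ n, Subgroup.normalCore_normal _,
          @Subgroup.finiteIndex_normalCore _ _ _ (hbr n)⟩ = 1) →
      ∀ (N : FIN ↥Γ) (n : ℕ), ∃ g : ↥Γ, g ∈ ristCore Γ n ∧
        (a : ∀ N : FIN ↥Γ, ↥Γ ⧸ N.1) N = QuotientGroup.mk g := by
    intro a ha N n
    set C : Subgroup ↥Γ := ristCore Γ n with hC
    haveI : C.Normal := Subgroup.normalCore_normal _
    haveI : C.FiniteIndex := @Subgroup.finiteIndex_normalCore _ _ _ (hbr n)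
    haveI : N.1.Normal := N.2.1
    haveI : N.1.FiniteIndex := N.2.2
    set P : Subgroup ↥Γ := N.1 ⊓ C with hP
    haveI hPn : P.Normal := Subgroup.normal_inf_normal N.1 C
    haveI hPf : P.FiniteIndex := inferInstance
    set PN : FIN ↥Γ := ⟨P, hPn, hPf⟩ with hPN
    set CN : FIN ↥Γ := ⟨C, Subgroup.normalCore_normal _,
      @Subgroup.finiteIndex_normalCore _ _ _ (hbr n)⟩ with hCN
    obtain ⟨g, hg⟩ := QuotientGroup.mk_surjective
      ((a : ∀ N : FIN ↥Γ, ↥Γ ⧸ N.1) PN)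
    have hcompC := a.2 PN CN (inf_le_right)
    have hcompN := a.2 PN N (inf_le_left)
    rw [← hg] at hcompC hcompN
    simp only [QuotientGroup.map_mk, MonoidHom.id_apply] at hcompC hcompN
    have hgC : g ∈ C := by
      have h1 : ((g : ↥Γ ⧸ C)) = 1 := by rw [hcompC]; exact ha n
      exact (QuotientGroup.eq_one_iff g).mp h1
    exact ⟨g, hgC, hcompN.symm⟩
  constructor
  · intro a b ha hb
    apply Subtype.ext; funext N
    obtain ⟨n, e, hD⟩ := hcof₁ N.1 N.2.1 N.2.2
    obtain ⟨g, hgC, hga⟩ := key a ha N n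
    obtain ⟨h, hhC, hhb⟩ := key b hb N n
    have hgR : g ∈ (ristLevel Γ n).subgroupOf Γ := Subgroup.normalCore_le _ hgC
    have hhR : h ∈ (ristLevel Γ n).subgroupOf Γ := Subgroup.normalCore_le _ hhC
    have hcomm : (g * h)⁻¹ * (h * g) ∈ N.1 := by
      open scoped commutatorElement in
      have : (g * h)⁻¹ * (h * g) = ⁅h⁻¹, g⁻¹⁆ := by group
      rw [this]
      exact hD (le_sup_left (α := Subgroup ↥Γ)
        (Subgroup.commutator_mem_commutator (inv_mem hhR) (inv_mem hgR)))
    have : ((a * b : ↥(ProfinComp ↥Γ)) : ∀ N : FIN ↥Γ, ↥Γ ⧸ N.1) N =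
        ((b * a : ↥(ProfinComp ↥Γ)) : ∀ N : FIN ↥Γ, ↥Γ ⧸ N.1) N := by
      show (a : ∀ N : FIN ↥Γ, ↥Γ ⧸ N.1) N * (b : ∀ N : FIN ↥Γ, ↥Γ ⧸ N.1) N =
        (b : ∀ N : FIN ↥Γ, ↥Γ ⧸ N.1) N * (a : ∀ N : FIN ↥Γ, ↥Γ ⧸ N.1) N
      rw [hga, hhb]
      show ((g * h : ↥Γ) : ↥Γ ⧸ N.1) = ((h * g : ↥Γ) : ↥Γ ⧸ N.1)
      exact (QuotientGroup.eq (s := N.1)).mpr hcomm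
    exact this
  · intro e he hexp a ha
    apply Subtype.ext; funext N
    obtain ⟨n, e', hD⟩ := hcof₁ N.1 N.2.1 N.2.2
    obtain ⟨g, hgC, hga⟩ := key a ha N n
    have hgR : g ∈ (ristLevel Γ n).subgroupOf Γ := Subgroup.normalCore_le _ hgC
    have hge : g ^ e ∈ N.1 := hD (le_sup_left (α := Subgroup ↥Γ) (hexp n g hgR))
    have : ((a ^ e : ↥(ProfinComp ↥Γ)) : ∀ N : FIN ↥Γ, ↥Γ ⧸ N.1) N =
        ((g : ↥Γ ⧸ N.1)) ^ e := by
      show ((a : ∀ N : FIN ↥Γ, ↥Γ ⧸ N.1) N) ^ e = _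
      rw [hga]
    rw [show ((1 : ↥(ProfinComp ↥Γ)) : ∀ N : FIN ↥Γ, ↥Γ ⧸ N.1) N = 1 from rfl,
      this, ← QuotientGroup.mk_pow]
    exact (QuotientGroup.eq_one_iff _).mpr hge
end
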